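/- Let F(t) = ∫_a^t f(τ) dτ be absolutely continuous on [A,B] with f integrable, and let G(t) = max_{τ ≤ t} F(τ) be its running maximum. Then G(t) = ∫_a^t g(τ) dτ where g = f · 1_{F = G}, i.e., G is absolutely continuous with derivative equal to f on the set where F equals its running maximum and zero elsewhere. -/
import Mathlib

open MeasureTheory intervalIntegral Set

private lemma bddAboveImage {A B x y : ℝ} {F : ℝ → ℝ} (hFc : ContinuousOn F (Icc A B))
    (hx : A ≤ x) (hy : y ≤ B) : BddAbove (F '' Icc x y) :=
  (isCompact_Icc.image_of_continuousOn (hFc.mono (Icc_subset_Icc hx hy))).bddAbove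

private lemma sSup_image_eq {A B x y : ℝ} {F : ℝ → ℝ} (hFc : ContinuousOn F (Icc A B))
    (hx : A ≤ x) (hxy : x ≤ y) (hy : y ≤ B) :
    ∃ σ ∈ Icc x y, F σ = sSup (F '' Icc x y) ∧ ∀ τ ∈ Icc x y, F τ ≤ F σ := by
  obtain ⟨σ, hσ, hmax⟩ := isCompact_Icc.exists_isMaxOn (nonempty_Icc.2 hxy)
    (hFc.mono (Icc_subset_Icc hx hy))
  have hmax' : ∀ τ ∈ Icc x y, F τ ≤ F σ := fun τ hτ => hmax hτ
  refine ⟨σ, hσ, (IsGreatest.csSup_eq ⟨mem_image_of_mem F hσ, ?_⟩).symm, hmax'⟩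
  rintro v ⟨τ, hτ, rfl⟩
  exact hmax' τ hτ

private lemma G_split {A B x y : ℝ} {F G : ℝ → ℝ} (hFc : ContinuousOn F (Icc A B))
    (hG : ∀ t ∈ Icc A B, G t = sSup (F '' Icc A t))
    (hx : A ≤ x) (hxy : x ≤ y) (hy : y ≤ B) :
    G y = max (G x) (sSup (F '' Icc x y)) := by
  rw [hG y ⟨hx.trans hxy, hy⟩, hG x ⟨hx, hxy.trans hy⟩, ← Icc_union_Icc_eq_Icc hx hxy,
    image_union]
  rw [csSup_union (bddAboveImage hFc le_rfl (hxy.trans hy)) ((nonempty_Icc.2 hx).image F)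
    (bddAboveImage hFc hx hy) ((nonempty_Icc.2 hxy).image F)]

private lemma F_le_G {A B τ : ℝ} {F G : ℝ → ℝ} (hFc : ContinuousOn F (Icc A B))
    (hG : ∀ t ∈ Icc A B, G t = sSup (F '' Icc A t)) (hτ : τ ∈ Icc A B) : F τ ≤ G τ := by
  rw [hG τ hτ]
  exact le_csSup (bddAboveImage hFc le_rfl hτ.2) (mem_image_of_mem F ⟨hτ.1, le_rfl⟩)

private lemma G_mono {A B x y : ℝ} {F G : ℝ → ℝ} (hFc : ContinuousOn F (Icc A B))
    (hG : ∀ t ∈ Icc A B, G t = sSup (F '' Icc A t))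
    (hx : A ≤ x) (hxy : x ≤ y) (hy : y ≤ B) : G x ≤ G y := by
  rw [G_split hFc hG hx hxy hy]; exact le_max_left _ _

private lemma G_key {A B x y : ℝ} {F G : ℝ → ℝ} (hFc : ContinuousOn F (Icc A B))
    (hG : ∀ t ∈ Icc A B, G t = sSup (F '' Icc A t))
    (hx : A ≤ x) (hxy : x ≤ y) (hy : y ≤ B)
    (hU : ∀ τ ∈ Ioo x y, F τ < G τ) : G y = max (G x) (F y) := by
  have hxB : x ≤ B := hxy.trans hy
  obtain ⟨σ, hσ, hσe, hσmax⟩ := sSup_image_eq hFc hx hxy hy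
  have hsplit : G y = max (G x) (F σ) := by rw [G_split hFc hG hx hxy hy, ← hσe]
  have hFyσ : F y ≤ F σ := hσmax y ⟨hxy, le_rfl⟩
  rcases eq_or_lt_of_le hσ.2 with h2 | h2
  · rw [hsplit, h2]
  rcases eq_or_lt_of_le hσ.1 with h1 | h1
  · have hFσx : F σ ≤ G x := h1 ▸ F_le_G hFc hG ⟨hx, hxB⟩
    rw [hsplit, max_eq_left hFσx, max_eq_left (hFyσ.trans hFσx)]
  · have hlt : F σ < G σ := hU σ ⟨h1, h2⟩
    have hσy : G σ ≤ G y := G_mono hFc hG (hx.trans h1.le) h2.le hy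
    have hFσGy : F σ < G y := hlt.trans_le hσy
    have hGyx : G y = G x := by
      rcases max_cases (G x) (F σ) with ⟨h, _⟩ | ⟨h, _⟩
      · rw [hsplit, h]
      · exact absurd (hsplit.trans h) (ne_of_gt hFσGy)
    rw [hGyx, max_eq_left ((hFyσ.trans hFσGy.le).trans hGyx.le)]

private lemma G_const {A B x y : ℝ} {F G : ℝ → ℝ} (hFc : ContinuousOn F (Icc A B))
    (hG : ∀ t ∈ Icc A B, G t = sSup (F '' Icc A t))
    (hx : A ≤ x) (hxy : x ≤ y) (hy : y ≤ B)
    (hU : ∀ τ ∈ Ioo x y, F τ < G τ) : G y = G x ∧ F y ≤ G x := by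
  have hFτ : ∀ τ ∈ Ioo x y, F τ < G x := by
    intro τ hτ
    have hk := G_key hFc hG hx hτ.1.le (hτ.2.le.trans hy)
      (fun s hs => hU s ⟨hs.1, hs.2.trans hτ.2⟩)
    have hlt := hU τ hτ
    rcases max_cases (G x) (F τ) with ⟨h, _⟩ | ⟨h, _⟩
    · rwa [hk, h] at hlt
    · exact absurd (hk.trans h) (ne_of_gt hlt)
  have hFyGx : F y ≤ G x := by
    rcases eq_or_lt_of_le hxy with rfl | hlt
    · exact F_le_G hFc hG ⟨hx, hy⟩
    · have hcw : ContinuousWithinAt F (Ioo x y) y :=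
        (hFc.continuousWithinAt ⟨hx.trans hxy, hy⟩).mono
          (fun τ hτ => ⟨hx.trans hτ.1.le, hτ.2.le.trans hy⟩)
      haveI : (nhdsWithin y (Ioo x y)).NeBot := by
        apply mem_closure_iff_nhdsWithin_neBot.1
        rw [closure_Ioo hlt.ne]
        exact ⟨hxy, le_rfl⟩
      exact le_of_tendsto hcw (eventually_nhdsWithin_of_forall (fun τ hτ => (hFτ τ hτ).le))
  have hk := G_key hFc hG hx hxy hy hU
  exact ⟨by rw [hk, max_eq_left hFyGx], hFyGx⟩

/-- If `F t = ∫_A^t f` with `f` integrable on `[A,B]` and `G` is the running maximum of `F`,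
then `G t = ∫_A^t f · 1_{F = G}`. -/
theorem stmt1 (A B : ℝ) (hAB : A < B) (f : ℝ → ℝ)
    (hf : IntegrableOn f (Set.Icc A B))
    (F G : ℝ → ℝ)
    (hF : ∀ t ∈ Set.Icc A B, F t = ∫ τ in A..t, f τ)
    (hG : ∀ t ∈ Set.Icc A B, G t = sSup (F '' Set.Icc A t)) :
    ∀ t ∈ Set.Icc A B,
      G t = ∫ τ in A..t, Set.indicator {τ : ℝ | F τ = G τ} f τ := by
  intro t ht
  obtain ⟨hAt, htB⟩ := ht
  have hABle : A ≤ B := hAB.le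
  have hFc : ContinuousOn F (Icc A B) := by
    refine (continuousOn_primitive_Icc hf).congr ?_
    intro x hx
    rw [hF x hx, intervalIntegral.integral_of_le hx.1]
    exact integral_Icc_eq_integral_Ioc.symm
  have hGA : G A = F A := by
    rw [hG A ⟨le_rfl, hABle⟩, Icc_self, image_singleton, csSup_singleton]
  set U : Set ℝ := {τ | τ ∈ Ioo A t ∧ F τ < G τ} with hUdef
  have hUsub : U ⊆ Ioo A t := fun τ h => h.1
  have hIooB : Ioo A t ⊆ Icc A B := fun τ hτ => ⟨hτ.1.le, hτ.2.le.trans htB⟩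
  have hUB : U ⊆ Icc A B := hUsub.trans hIooB
  have hnotU : ∀ τ ∈ Ioo A t, τ ∉ U → F τ = G τ := by
    intro τ hτ h
    refine le_antisymm (F_le_G hFc hG (hIooB hτ)) (not_lt.1 (fun hlt => h ⟨hτ, hlt⟩))
  -- U is open
  have hUopen : IsOpen U := by
    rw [isOpen_iff_mem_nhds]
    intro x hx
    obtain ⟨hxI, hxFG⟩ := hx
    have hxB : x < B := hxI.2.trans_le htB
    have hFca : ContinuousAt F x := hFc.continuousAt (Icc_mem_nhds hxI.1 hxB)
    have h1 : F x < (F x + G x) / 2 := by linarith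
    have h2 : (F x + G x) / 2 < G x := by linarith
    have hev : ∀ᶠ τ in nhds x, F τ < (F x + G x) / 2 := hFca.eventually_lt_const h1
    obtain ⟨ε, hε, hball⟩ := Metric.eventually_nhds_iff_ball.1 hev
    set δ := min ε (min (x - A) (t - x)) with hδdef
    have hδ : 0 < δ := lt_min hε (lt_min (by linarith [hxI.1]) (by linarith [hxI.2]))
    have hδε : δ ≤ ε := min_le_left _ _
    have hδA : δ ≤ x - A := (min_le_right ε _).trans (min_le_left _ _)
    have hδt : δ ≤ t - x := (min_le_right ε _).trans (min_le_right _ _)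
    refine Filter.mem_of_superset
      (Ioo_mem_nhds (by linarith : x - δ < x) (by linarith : x < x + δ)) ?_
    intro τ hτ
    obtain ⟨hτ1, hτ2⟩ := hτ
    have hτε : F τ < (F x + G x) / 2 := by
      apply hball
      rw [Metric.mem_ball, Real.dist_eq, abs_lt]
      constructor <;> linarith
    have hτI : τ ∈ Ioo A t := ⟨by linarith, by linarith⟩
    have hτB : A ≤ τ := hτI.1.le
    refine ⟨hτI, ?_⟩
    rcases le_or_gt x τ with hle | hlt
    · have : G x ≤ G τ := G_mono hFc hG hxI.1.le hle (hτI.2.le.trans htB)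
      linarith
    · obtain ⟨σ, hσm, hσe, _⟩ := sSup_image_eq hFc hτB hlt.le hxB.le
      have hsplit := G_split hFc hG hτB hlt.le hxB.le
      have hσball : F σ < (F x + G x) / 2 := by
        apply hball
        rw [Metric.mem_ball, Real.dist_eq, abs_lt]
        obtain ⟨hσ1, hσ2⟩ := hσm
        constructor <;> linarith
      have hGτx : G τ = G x := by
        rcases max_cases (G τ) (sSup (F '' Icc τ x)) with ⟨h, _⟩ | ⟨h, _⟩
        · rw [hsplit, h]
        · exfalso
          have : G x = F σ := by rw [hsplit, h, ← hσe]
          linarith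
      rw [hGτx]; linarith
  -- interval integrability helpers
  have hint : ∀ x y, A ≤ x → x ≤ y → y ≤ B → IntervalIntegrable f volume x y := by
    intro x y h1 h2 h3
    exact (hf.mono_set (by rw [uIcc_of_le h2]; exact Icc_subset_Icc h1 h3)).intervalIntegrable
  have hFsub : ∀ x y, A ≤ x → x ≤ y → y ≤ B → ∫ τ in x..y, f τ = F y - F x := by
    intro x y h1 h2 h3
    rw [hF y ⟨h1.trans h2, h3⟩, hF x ⟨h1, h2.trans h3⟩]
    exact (integral_interval_sub_left (hint A y le_rfl (h1.trans h2) h3)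
      (hint A x le_rfl h1 (h2.trans h3))).symm
  -- components
  set C : Set (Set ℝ) := connectedComponentIn U '' U with hCdef
  have hCopen : ∀ c ∈ C, IsOpen c := by
    rintro c ⟨x, hx, rfl⟩; exact hUopen.connectedComponentIn
  have hCne : ∀ c ∈ C, c.Nonempty := by
    rintro c ⟨x, hx, rfl⟩; exact ⟨x, mem_connectedComponentIn hx⟩
  have hCsub : ∀ c ∈ C, c ⊆ U := by
    rintro c ⟨x, hx, rfl⟩; exact connectedComponentIn_subset U x
  have hCdisj : C.PairwiseDisjoint id := by
    rintro c₁ ⟨x₁, hx₁, rfl⟩ c₂ ⟨x₂, hx₂, rfl⟩ hne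
    rw [Function.onFun, id, id]
    by_contra h
    obtain ⟨y, hy₁, hy₂⟩ := Set.not_disjoint_iff.1 h
    exact hne ((connectedComponentIn_eq hy₁).trans (connectedComponentIn_eq hy₂).symm)
  have hCcount : C.Countable :=
    hCdisj.countable_of_isOpen (fun c hc => hCopen c hc) (fun c hc => hCne c hc)
  haveI := hCcount.to_subtype
  have hUnion : ⋃ (c : C), (c : Set ℝ) = U := by
    apply Subset.antisymm
    · exact iUnion_subset (fun c => hCsub c c.2)
    · intro x hx
      exact mem_iUnion.2 ⟨⟨_, mem_image_of_mem _ hx⟩, mem_connectedComponentIn hx⟩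
  have hfU : IntegrableOn f U := hf.mono_set hUB
  have hsum : ∫ x in U, f x = ∑' (c : C), ∫ x in (c : Set ℝ), f x := by
    have := integral_iUnion (μ := volume) (f := f) (s := fun c : C => (c : Set ℝ))
      (fun c => (hCopen c c.2).measurableSet)
      ((hCdisj.subtype _ _).mono (fun c d h => h))
      (by rw [hUnion]; exact hfU)
    rw [← this, hUnion]
  -- per-component analysis
  have hcomp : ∀ c ∈ C, ∃ a, A ≤ a ∧ a < sSup c ∧ c = Ioo a (sSup c) ∧ sSup c ≤ t ∧
      (sSup c = t → ∫ x in c, f x = F t - G t) ∧ (sSup c ≠ t → ∫ x in c, f x = 0) := by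
    rintro c ⟨x, hxU, rfl⟩
    set cc := connectedComponentIn U x with hccdef
    have hcU : cc ⊆ U := connectedComponentIn_subset U x
    have hcI : cc ⊆ Ioo A t := hcU.trans hUsub
    have hxc : x ∈ cc := mem_connectedComponentIn hxU
    have hbddA : BddAbove cc := ⟨t, fun z hz => (hcI hz).2.le⟩
    have hbddB : BddBelow cc := ⟨A, fun z hz => (hcI hz).1.le⟩
    set a := sInf cc with hadef
    set b := sSup cc with hbdef
    have hne : cc.Nonempty := ⟨x, hxc⟩
    have haA : A ≤ a := le_csInf hne (fun z hz => (hcI hz).1.le)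
    have hbt : b ≤ t := csSup_le hne (fun z hz => (hcI hz).2.le)
    have hopen : IsOpen cc := hUopen.connectedComponentIn
    have hbcc : b ∉ cc := by
      intro hb
      obtain ⟨ε, hε, hball⟩ := Metric.isOpen_iff.1 hopen b hb
      have hmem : b + ε / 2 ∈ cc := by
        apply hball
        rw [Metric.mem_ball, Real.dist_eq]
        rw [abs_of_nonneg (by linarith)]
        linarith
      linarith [le_csSup hbddA hmem]
    have hacc : a ∉ cc := by
      intro ha
      obtain ⟨ε, hε, hball⟩ := Metric.isOpen_iff.1 hopen a ha
      have hmem : a - ε / 2 ∈ cc := by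
        apply hball
        rw [Metric.mem_ball, Real.dist_eq]
        rw [abs_of_nonpos (by linarith)]
        linarith
      linarith [csInf_le hbddB hmem]
    have hOrd : OrdConnected cc :=
      (isPreconnected_connectedComponentIn (x := x) (F := U)).ordConnected
    have hIoosub : Ioo a b ⊆ cc := by
      intro z hz
      obtain ⟨u, huc, huz⟩ := exists_lt_of_csInf_lt hne hz.1
      obtain ⟨v, hvc, hzv⟩ := exists_lt_of_lt_csSup hne hz.2
      exact hOrd.out huc hvc ⟨huz.le, hzv.le⟩
    have hceq : cc = Ioo a b := by
      refine Subset.antisymm (fun z hz => ?_) hIoosub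
      have h1 : a ≤ z := csInf_le hbddB hz
      have h2 : z ≤ b := le_csSup hbddA hz
      refine ⟨h1.lt_of_ne (fun h => hacc (h ▸ hz)), h2.lt_of_ne (fun h => hbcc (h ▸ hz))⟩
    have hab : a < b := by
      have hx' : x ∈ Ioo a b := hceq ▸ hxc
      exact hx'.1.trans hx'.2
    have hFlt : ∀ τ ∈ Ioo a b, F τ < G τ := fun τ hτ => (hcU (hIoosub hτ)).2
    have hbB : b ≤ B := hbt.trans htB
    obtain ⟨hGba, hFbGa⟩ := G_const hFc hG haA hab.le hbB hFlt
    -- boundary points are not in U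
    have hclos : ∀ z, z ∈ U → z ∈ closure cc → z ∈ cc := by
      intro z hzU hzc
      obtain ⟨ε, hε, hball⟩ := Metric.isOpen_iff.1 hUopen z hzU
      obtain ⟨y, hycc, hyd⟩ := Metric.mem_closure_iff.1 hzc ε hε
      have hpre : IsPreconnected (Metric.ball z ε ∪ cc) := by
        apply IsPreconnected.union y
        · rw [Metric.mem_ball, dist_comm]; exact hyd
        · exact hycc
        · exact (convex_ball z ε).isPreconnected
        · exact isPreconnected_connectedComponentIn
      have hsubU : Metric.ball z ε ∪ cc ⊆ U := union_subset hball hcU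
      have hss := hpre.subset_connectedComponentIn (Or.inr hxc) hsubU
      exact hss (Or.inl (Metric.mem_ball_self hε))
    have haU : a ∉ U := fun h => hacc (hclos a h (csInf_mem_closure hne hbddB))
    have hbU : b ∉ U := fun h => hbcc (hclos b h (csSup_mem_closure hne hbddA))
    have hFaGa : F a = G a := by
      rcases eq_or_lt_of_le haA with h | h
      · rw [← h, hGA]
      · exact hnotU a ⟨h, hab.trans_le hbt⟩ haU
    have hInt : ∫ x in cc, f x = F b - G b := by
      rw [hceq, ← integral_Ioc_eq_integral_Ioo, ← intervalIntegral.integral_of_le hab.le,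
        hFsub a b haA hab.le hbB, hFaGa, hGba]
    refine ⟨a, haA, hab, hceq, hbt, ?_, ?_⟩
    · intro hbt'
      rw [hInt, hbt']
    · intro hbt'
      have hbIoo : b ∈ Ioo A t := ⟨haA.trans_lt hab, hbt.lt_of_ne hbt'⟩
      have : F b = G b := hnotU b hbIoo hbU
      rw [hInt, this, sub_self]
  -- the total sum
  have hFtGt : F t ≤ G t := F_le_G hFc hG ⟨hAt, htB⟩
  have htsum : ∑' (c : C), ∫ x in (c : Set ℝ), f x = F t - G t := by
    rcases eq_or_lt_of_le hFtGt with hFGt | hFGt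
    · have hzero : ∀ c : C, ∫ x in (c : Set ℝ), f x = 0 := by
        intro c
        obtain ⟨a, _, _, _, _, heq, hne0⟩ := hcomp c c.2
        by_cases hb : sSup (c : Set ℝ) = t
        · rw [heq hb, hFGt, sub_self]
        · exact hne0 hb
      rw [tsum_congr hzero, tsum_zero, hFGt, sub_self]
    · have htA' : A < t := by
        rcases eq_or_lt_of_le hAt with h | h
        · exfalso
          rw [← h, hGA] at hFGt
          exact lt_irrefl _ hFGt
        · exact h
      have hcw : ContinuousWithinAt F (Icc A B) t := hFc.continuousWithinAt ⟨hAt, htB⟩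
      have hev : ∀ᶠ τ in nhdsWithin t (Icc A B), F τ < (F t + G t) / 2 :=
        hcw.eventually_lt_const (by linarith)
      obtain ⟨ε, hε, hball⟩ := Metric.mem_nhdsWithin_iff.1 hev
      set τ₀ := max A (t - ε) with hτ₀def
      have hτ₀t : τ₀ < t := max_lt htA' (by linarith)
      have hτ₀A : A ≤ τ₀ := le_max_left _ _
      have hτ₀ε : t - ε ≤ τ₀ := le_max_right _ _
      have hsubU : Ioo τ₀ t ⊆ U := by
        intro τ hτ
        have hτI : τ ∈ Ioo A t := ⟨hτ₀A.trans_lt hτ.1, hτ.2⟩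
        have hτB : τ ∈ Icc A B := hIooB hτI
        have hτball : ∀ σ ∈ Icc τ t, F σ < (F t + G t) / 2 := by
          intro σ hσ
          obtain ⟨hσ1, hσ2⟩ := hσ
          apply hball
          constructor
          · rw [Metric.mem_ball, Real.dist_eq, abs_lt]
            have h1 : τ₀ < σ := hτ.1.trans_le hσ1
            constructor <;> linarith
          · exact ⟨hτB.1.trans hσ1, hσ2.trans htB⟩
        obtain ⟨σ, hσm, hσe, _⟩ := sSup_image_eq hFc hτB.1 hτ.2.le htB
        have hsplit := G_split hFc hG hτB.1 hτ.2.le htB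
        have hσlt : F σ < (F t + G t) / 2 := hτball σ hσm
        have hGτt : G τ = G t := by
          rcases max_cases (G τ) (sSup (F '' Icc τ t)) with ⟨h, _⟩ | ⟨h, _⟩
          · rw [hsplit, h]
          · exfalso
            have : G t = F σ := by rw [hsplit, h, ← hσe]
            linarith
        refine ⟨hτI, ?_⟩
        rw [hGτt]
        have := hτball τ ⟨le_rfl, hτ.2.le⟩
        linarith
      set x₀ := (τ₀ + t) / 2 with hx₀def
      have hx₀ : x₀ ∈ Ioo τ₀ t := ⟨by simp only [hx₀def]; linarith, by simp only [hx₀def]; linarith⟩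
      have hx₀U : x₀ ∈ U := hsubU hx₀
      set c₀ : Set ℝ := connectedComponentIn U x₀ with hc₀def
      have hc₀C : c₀ ∈ C := mem_image_of_mem _ hx₀U
      have hbdd : BddAbove c₀ := ⟨t, fun z hz => (hUsub (connectedComponentIn_subset U x₀ hz)).2.le⟩
      have hc₀sup : sSup c₀ = t := by
        apply le_antisymm
        · exact csSup_le ⟨x₀, mem_connectedComponentIn hx₀U⟩
            (fun z hz => (hUsub (connectedComponentIn_subset U x₀ hz)).2.le)
        · have hIoosub : Ioo τ₀ t ⊆ c₀ :=
            isPreconnected_Ioo.subset_connectedComponentIn hx₀ hsubU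
          calc t = sSup (Ioo τ₀ t) := (csSup_Ioo hτ₀t).symm
            _ ≤ sSup c₀ := csSup_le_csSup hbdd (nonempty_Ioo.2 hτ₀t) hIoosub
      rw [tsum_eq_single (⟨c₀, hc₀C⟩ : C) ?_]
      · exact (hcomp c₀ hc₀C).choose_spec.2.2.2.2.1 hc₀sup
      · intro c hc
        obtain ⟨a₁, ha₁A, ha₁lt, hceq₁, hle₁, heq₁, hne₁⟩ := hcomp c c.2
        apply hne₁
        intro hsupc
        obtain ⟨a₀, ha₀A, ha₀lt, hceq₀, hle₀, _, _⟩ := hcomp c₀ hc₀C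
        rw [hc₀sup] at hceq₀ ha₀lt
        rw [hsupc] at hceq₁ ha₁lt
        have hz : (max a₁ a₀ + t) / 2 ∈ (c : Set ℝ) ∩ c₀ := by
          have hmax : max a₁ a₀ < t := max_lt ha₁lt ha₀lt
          constructor
          · rw [hceq₁]
            exact ⟨by have := le_max_left a₁ a₀; linarith, by linarith⟩
          · rw [hceq₀]
            exact ⟨by have := le_max_right a₁ a₀; linarith, by linarith⟩
        have hdisj := hCdisj c.2 hc₀C (fun h => hc (Subtype.ext h))
        rw [Function.onFun, id, id, Set.disjoint_iff_inter_eq_empty] at hdisj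
        rw [hdisj] at hz
        exact absurd hz (notMem_empty _)
  have hU_int : ∫ x in U, f x = F t - G t := hsum.trans htsum
  have hFt : F t = ∫ x in Ioo A t, f x := by
    rw [hF t ⟨hAt, htB⟩, intervalIntegral.integral_of_le hAt, integral_Ioc_eq_integral_Ioo]
  rw [intervalIntegral.integral_of_le hAt, integral_Ioc_eq_integral_Ioo]
  have hEq : EqOn (indicator {τ : ℝ | F τ = G τ} f) (indicator (Ioo A t \ U) f) (Ioo A t) := by
    intro τ hτ
    by_cases h : τ ∈ U
    · have h1 : τ ∉ {τ : ℝ | F τ = G τ} := fun hmem => absurd hmem (ne_of_lt h.2)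
      rw [indicator_of_notMem h1, indicator_of_notMem (fun hd => hd.2 h)]
    · have h1 : τ ∈ {τ : ℝ | F τ = G τ} := hnotU τ hτ h
      have h2 : τ ∈ Ioo A t \ U := ⟨hτ, h⟩
      rw [indicator_of_mem h1, indicator_of_mem h2]
  rw [setIntegral_congr_fun measurableSet_Ioo hEq,
    setIntegral_indicator (measurableSet_Ioo.diff hUopen.measurableSet),
    inter_eq_self_of_subset_right diff_subset,
    integral_diff hUopen.measurableSet (hf.mono_set (Ioo_subset_Icc_self.trans
      (Icc_subset_Icc le_rfl htB))) hUsub,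
    hU_int, ← hFt]
  ring
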